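/- Let F be a formal group law over a complete local ring R, let A be a finite abelian group and ℓ : A → R a homomorphism to the formal group of F (ℓ(a) topologically nilpotent, ℓ(a+b) = F(ℓ(a),ℓ(b))) such that K = ∏_{a∈A}(x - ℓ(a)) generates the ideal of a subgroup divisor. Then the power series y(x) = ∏_{a ∈ A} (x +_F ℓ(a)) ∈ R[[x]] satisfies y(x) = ε·∏_{a∈A}(x - ℓ(a)) for a unit ε of R[[x]]; in particular y has x-adic valuation exactly |A| modulo the maximal ideal contributions, and y(ℓ(b)) = 0 for each b ∈ A. -/

import Mathlib

open Finset

noncomputable section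

namespace FGL

variable {R : Type*} [CommRing R]

/-- The monomial index `x^i y^j` for two-variable power series. -/
def mono (i j : ℕ) : Fin 2 →₀ ℕ := Finsupp.single 0 i + Finsupp.single 1 j

/-- Substitute `(g(t), t)` into a two-variable power series `F`; this is the honest
substitution `F(g(t), t)` whenever `g` has zero constant term. -/
def subst2 (F : MvPowerSeries (Fin 2) R) (g : PowerSeries R) : PowerSeries R :=
  PowerSeries.mk fun n => ∑ i ∈ Finset.range (n + 1), ∑ j ∈ Finset.range (n + 1),
    MvPowerSeries.coeff (mono i j) F * PowerSeries.coeff (n - j) (g ^ i)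

/-- The three-variable power series `F(F(x,y),z)` (for `F` with zero constant term). -/
def assocLeft (F : MvPowerSeries (Fin 2) R) : MvPowerSeries (Fin 3) R :=
  fun m => ∑ i ∈ Finset.range (m 0 + m 1 + 1),
    MvPowerSeries.coeff (mono i (m 2)) F *
      MvPowerSeries.coeff (mono (m 0) (m 1)) (F ^ i)

/-- The three-variable power series `F(x,F(y,z))` (for `F` with zero constant term). -/
def assocRight (F : MvPowerSeries (Fin 2) R) : MvPowerSeries (Fin 3) R :=
  fun m => ∑ j ∈ Finset.range (m 1 + m 2 + 1),
    MvPowerSeries.coeff (mono (m 0) j) F *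
      MvPowerSeries.coeff (mono (m 1) (m 2)) (F ^ j)

/-- A (one-dimensional, commutative) formal group law over `R`: a two-variable power
series `F(x,y)` with `F(x,0)=x`, `F(0,y)=y`, `F(x,y)=F(y,x)` and
`F(F(x,y),z)=F(x,F(y,z))`. -/
structure FormalGroupLaw (R : Type*) [CommRing R] where
  F : MvPowerSeries (Fin 2) R
  left_unit : ∀ i : ℕ, MvPowerSeries.coeff (mono i 0) F = if i = 1 then 1 else 0
  right_unit : ∀ j : ℕ, MvPowerSeries.coeff (mono 0 j) F = if j = 1 then 1 else 0
  comm : ∀ i j : ℕ, MvPowerSeries.coeff (mono i j) F = MvPowerSeries.coeff (mono j i) F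
  assoc : assocLeft F = assocRight F

/-- The `n`-series `[n](t)` of a formal group law, defined by `[0](t) = 0` and
`[n+1](t) = F([n](t), t)`. -/
def nSeries (Φ : FormalGroupLaw R) : ℕ → PowerSeries R
  | 0 => 0
  | n + 1 => subst2 Φ.F (nSeries Φ n)

open Classical in
/-- Evaluation of a power series at a nilpotent element (the sum is finite). -/
def nilEval (f : PowerSeries R) (a : R) : R :=
  if h : IsNilpotent a then ∑ i ∈ Finset.range h.choose, PowerSeries.coeff i f * a ^ i
  else 0

open Classical in
/-- Evaluation of a two-variable power series at a pair of nilpotent elements. -/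
def nilEval₂ (F : MvPowerSeries (Fin 2) R) (a b : R) : R :=
  if h : ∃ N, a ^ N = 0 ∧ b ^ N = 0 then
    ∑ i ∈ Finset.range h.choose, ∑ j ∈ Finset.range h.choose,
      MvPowerSeries.coeff (mono i j) F * a ^ i * b ^ j
  else 0

open Classical in
/-- The one-variable power series `x ↦ F(x, c)` for `c` nilpotent. -/
def addConst (F : MvPowerSeries (Fin 2) R) (c : R) : PowerSeries R :=
  if h : IsNilpotent c then
    PowerSeries.mk fun n => ∑ j ∈ Finset.range h.choose,
      MvPowerSeries.coeff (mono n j) F * c ^ j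
  else 0

/-- A homomorphism from a finite abelian group `A` to the formal group of `F`:
a function with nilpotent values, sending `0` to `0` and `+` to formal addition. -/
def IsHom (F : MvPowerSeries (Fin 2) R) {A : Type*} [AddCommGroup A] (ℓ : A → R) : Prop :=
  ℓ 0 = 0 ∧ (∀ a, IsNilpotent (ℓ a)) ∧ ∀ a b : A, ℓ (a + b) = nilEval₂ F (ℓ a) (ℓ b)

section Helpers

open PowerSeries in
lemma sum_pow_shrink {a : R} {N M : ℕ} (f : ℕ → R) (hN : a ^ N = 0) (h : N ≤ M) :
    ∑ i ∈ range M, f i * a ^ i = ∑ i ∈ range N, f i * a ^ i := by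
  refine (Finset.sum_subset (Finset.range_subset_range.2 h) fun i _ hni => ?_).symm
  have hNi : N ≤ i := by simpa using hni
  have : a ^ i = 0 := by
    calc a ^ i = a ^ N * a ^ (i - N) := by rw [← pow_add]; congr 1; omega
    _ = 0 := by rw [hN, zero_mul]
  rw [this, mul_zero]

lemma sum_pow_ext (f : ℕ → R) {a : R} {N M : ℕ} (hN : a ^ N = 0) (hM : a ^ M = 0) :
    ∑ i ∈ range N, f i * a ^ i = ∑ i ∈ range M, f i * a ^ i := by
  rcases le_total N M with h | h
  · exact (sum_pow_shrink f hN h).symm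
  · exact sum_pow_shrink f hM h

lemma nilEval_eq (f : PowerSeries R) {a : R} {N : ℕ} (hN : a ^ N = 0) :
    nilEval f a = ∑ i ∈ range N, PowerSeries.coeff i f * a ^ i := by
  have h : IsNilpotent a := ⟨N, hN⟩
  rw [nilEval, dif_pos h]
  exact sum_pow_ext _ h.choose_spec hN

lemma nilEval₂_eq (F : MvPowerSeries (Fin 2) R) {a b : R} {N : ℕ} (hA : a ^ N = 0)
    (hB : b ^ N = 0) :
    nilEval₂ F a b = ∑ i ∈ range N, ∑ j ∈ range N,
      MvPowerSeries.coeff (mono i j) F * a ^ i * b ^ j := by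
  have h : ∃ n : ℕ, a ^ n = 0 ∧ b ^ n = 0 := ⟨N, hA, hB⟩
  rw [nilEval₂, dif_pos h]
  obtain ⟨hA', hB'⟩ := h.choose_spec
  set T : ℕ → ℕ → R := fun i j => MvPowerSeries.coeff (mono i j) F with hT
  have key : ∀ (P Q : ℕ), b ^ P = 0 → b ^ Q = 0 → ∀ K,
      ∑ i ∈ range K, ∑ j ∈ range P, T i j * a ^ i * b ^ j
        = ∑ i ∈ range K, ∑ j ∈ range Q, T i j * a ^ i * b ^ j :=
    fun P Q hP hQ K => Finset.sum_congr rfl fun i _ => sum_pow_ext _ hP hQ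
  have swap : ∀ K, ∑ i ∈ range K, ∑ j ∈ range N, T i j * a ^ i * b ^ j
      = ∑ i ∈ range K, (∑ j ∈ range N, T i j * b ^ j) * a ^ i := by
    intro K
    refine Finset.sum_congr rfl fun i _ => ?_
    rw [Finset.sum_mul]
    exact Finset.sum_congr rfl fun j _ => by ring
  rw [key _ _ hB' hB, swap, swap, sum_pow_ext _ hA' hA]

lemma coeff_addConst (F : MvPowerSeries (Fin 2) R) {c : R} {M : ℕ} (hc : c ^ M = 0) (n : ℕ) :
    PowerSeries.coeff n (addConst F c) = ∑ j ∈ range M,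
      MvPowerSeries.coeff (mono n j) F * c ^ j := by
  have h : IsNilpotent c := ⟨M, hc⟩
  rw [addConst, dif_pos h, PowerSeries.coeff_mk]
  exact sum_pow_ext _ h.choose_spec hc

lemma nilEval_addConst (F : MvPowerSeries (Fin 2) R) {b c : R} (hb : IsNilpotent b)
    (hc : IsNilpotent c) : nilEval (addConst F c) b = nilEval₂ F b c := by
  obtain ⟨N, hN⟩ := hb
  obtain ⟨M, hM⟩ := hc
  have hbK : b ^ (N + M) = 0 := by rw [pow_add, hN, zero_mul]
  have hcK : c ^ (N + M) = 0 := by rw [pow_add, hM, mul_zero]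
  rw [nilEval_eq _ hbK, nilEval₂_eq F hbK hcK]
  refine Finset.sum_congr rfl fun i _ => ?_
  rw [coeff_addConst F hcK, Finset.sum_mul]
  exact Finset.sum_congr rfl fun j _ => by ring

lemma poly_eval_nil (p : Polynomial R) {a : R} {N : ℕ} (hN : a ^ N = 0) :
    p.eval a = ∑ i ∈ range N, p.coeff i * a ^ i := by
  have hdeg : p.natDegree < max (p.natDegree + 1) N :=
    lt_of_lt_of_le (Nat.lt_succ_self _) (le_max_left _ _)
  rw [Polynomial.eval_eq_sum_range' hdeg]
  exact sum_pow_shrink _ hN (le_max_right _ _)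

lemma nilEval_trunc (f : PowerSeries R) {a : R} {N : ℕ} (hN : a ^ (N + 1) = 0) :
    nilEval f a = (PowerSeries.trunc (N + 1) f).eval a := by
  rw [nilEval_eq f hN, poly_eval_nil _ hN]
  refine Finset.sum_congr rfl fun i hi => ?_
  rw [PowerSeries.coeff_trunc, if_pos (Finset.mem_range.1 hi)]

lemma nilEval_mul (f g : PowerSeries R) {a : R} (ha : IsNilpotent a) :
    nilEval (f * g) a = nilEval f a * nilEval g a := by
  obtain ⟨N, hN⟩ := ha
  have hN1 : a ^ (N + 1) = 0 := by rw [pow_succ, hN, zero_mul]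
  rw [nilEval_eq (f * g) hN1, nilEval_trunc f hN1, nilEval_trunc g hN1, ← Polynomial.eval_mul,
    poly_eval_nil _ hN1]
  refine Finset.sum_congr rfl fun i hi => ?_
  have hi' : i < N + 1 := Finset.mem_range.1 hi
  rw [PowerSeries.coeff_mul_eq_coeff_trunc_mul_trunc₂ f g hi' hi', ← Polynomial.coe_mul,
    Polynomial.coeff_coe]

lemma nilEval_one {a : R} (ha : IsNilpotent a) : nilEval (1 : PowerSeries R) a = 1 := by
  obtain ⟨N, hN⟩ := ha
  have hN1 : a ^ (N + 1) = 0 := by rw [pow_succ, hN, zero_mul]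
  rw [nilEval_eq _ hN1, Finset.sum_eq_single 0]
  · simp
  · intro i _ hi
    rw [PowerSeries.coeff_one, if_neg hi, zero_mul]
  · intro h
    exact absurd (Finset.mem_range.2 (Nat.succ_pos N)) h

lemma nilEval_prod {ι : Type*} (s : Finset ι) (f : ι → PowerSeries R) {a : R}
    (ha : IsNilpotent a) :
    nilEval (∏ i ∈ s, f i) a = ∏ i ∈ s, nilEval (f i) a := by
  classical
  induction s using Finset.induction_on with
  | empty => simpa using nilEval_one ha
  | insert _ _ h ih => rw [Finset.prod_insert h, Finset.prod_insert h, nilEval_mul _ _ ha, ih]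

lemma factor_of_root (f : PowerSeries R) {c : R} {N : ℕ} (hc : c ^ N = 0)
    (hroot : nilEval f c = 0) :
    f = (PowerSeries.X - PowerSeries.C c) *
        PowerSeries.mk (fun k => ∑ n ∈ range (N + 1), PowerSeries.coeff (k + 1 + n) f * c ^ n)
      := by
  have hc1 : c ^ (N + 1) = 0 := by rw [pow_succ, hc, zero_mul]
  have hc2 : c ^ (N + 2) = 0 := by rw [pow_succ, hc1, zero_mul]
  set g : PowerSeries R :=
    PowerSeries.mk (fun k => ∑ n ∈ range (N + 1), PowerSeries.coeff (k + 1 + n) f * c ^ n)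
    with hg
  ext k
  rw [sub_mul, map_sub, PowerSeries.coeff_C_mul]
  cases k with
  | zero =>
    have h0 : (PowerSeries.coeff 0) (PowerSeries.X * g) = 0 := by
      simp [PowerSeries.coeff_zero_eq_constantCoeff]
    rw [h0, zero_sub]
    have hr : ∑ m ∈ range (N + 2), PowerSeries.coeff m f * c ^ m = 0 := by
      rw [← nilEval_eq f hc2, hroot]
    rw [Finset.sum_range_succ'] at hr
    have hg0 : c * PowerSeries.coeff 0 g
        = ∑ n ∈ range (N + 1), PowerSeries.coeff (n + 1) f * c ^ (n + 1) := by
      rw [hg, PowerSeries.coeff_mk, Finset.mul_sum]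
      refine Finset.sum_congr rfl fun n _ => ?_
      rw [show 0 + 1 + n = n + 1 from by omega]
      ring
    rw [hg0]
    simp only [pow_zero, mul_one] at hr
    linear_combination hr
  | succ k =>
    rw [PowerSeries.coeff_succ_X_mul]
    have hgk : PowerSeries.coeff k g
        = PowerSeries.coeff (k + 1) f
          + ∑ n ∈ range N, PowerSeries.coeff (k + 2 + n) f * c ^ (n + 1) := by
      rw [hg, PowerSeries.coeff_mk, Finset.sum_range_succ']
      simp only [pow_zero, mul_one]
      rw [add_comm]
      congr 1
      exact Finset.sum_congr rfl fun n _ => by rw [show k + 1 + (n + 1) = k + 2 + n from by omega]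
    have hgk1 : c * PowerSeries.coeff (k + 1) g
        = ∑ n ∈ range N, PowerSeries.coeff (k + 2 + n) f * c ^ (n + 1) := by
      rw [hg, PowerSeries.coeff_mk, Finset.mul_sum, Finset.sum_range_succ]
      have hlast : c * (PowerSeries.coeff (k + 1 + 1 + N) f * c ^ N) = 0 := by
        have h2 : c * (PowerSeries.coeff (k + 1 + 1 + N) f * c ^ N)
            = PowerSeries.coeff (k + 1 + 1 + N) f * c ^ (N + 1) := by ring
        rw [h2, hc1, mul_zero]
      rw [hlast, add_zero]
      refine Finset.sum_congr rfl fun n _ => ?_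
      rw [show k + 1 + 1 + n = k + 2 + n from by omega]
      ring
    rw [hgk, hgk1]
    ring

lemma nil_mul_pow_succ {c : R} {M : ℕ} (hM : c ^ M = 0) (x : R) (n : ℕ) :
    IsNilpotent (x * c ^ (n + 1)) := by
  refine ⟨M, ?_⟩
  rw [mul_pow, ← pow_mul, show (n + 1) * M = M + n * M from by ring, pow_add, hM, zero_mul,
    mul_zero]

end Helpers

end FGL

open FGL in
/-- for a homomorphism `ℓ : A → R` to the formal group of `F`, Lubin's
power series `y(x) = ∏_{a∈A} F(x, ℓ(a))` equals a unit of `R[[x]]` times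
`∏_{a∈A}(x - ℓ(a))`, and `y(ℓ(b)) = 0` for every `b ∈ A`. -/
theorem lubin_series_factorization {R : Type*} [CommRing R] (Φ : FormalGroupLaw R)
    {A : Type*} [AddCommGroup A] [Fintype A]
    (ℓ : A → R) (hℓ : IsHom Φ.F ℓ) :
    (∃ ε : (PowerSeries R)ˣ,
      (∏ a : A, addConst Φ.F (ℓ a)) =
        (ε : PowerSeries R) * ∏ a : A, (PowerSeries.X - PowerSeries.C (ℓ a))) ∧
    ∀ b : A, nilEval (∏ a : A, addConst Φ.F (ℓ a)) (ℓ b) = 0 := by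
  obtain ⟨hzero, hnil, hadd⟩ := hℓ
  have hroot : ∀ a : A, nilEval (addConst Φ.F (ℓ a)) (ℓ (-a)) = 0 := by
    intro a
    rw [nilEval_addConst _ (hnil (-a)) (hnil a), ← hadd (-a) a, neg_add_cancel, hzero]
  have key : ∀ a : A, ∃ g : PowerSeries R, IsUnit g ∧
      addConst Φ.F (ℓ a) = (PowerSeries.X - PowerSeries.C (ℓ (-a))) * g := by
    intro a
    obtain ⟨M, hM⟩ := hnil (-a)
    refine ⟨_, ?_, factor_of_root _ hM (hroot a)⟩
    rw [PowerSeries.isUnit_iff_constantCoeff]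
    have hcc : PowerSeries.constantCoeff (PowerSeries.mk fun k => ∑ n ∈ range (M + 1),
          PowerSeries.coeff (k + 1 + n) (addConst Φ.F (ℓ a)) * ℓ (-a) ^ n)
        = ∑ n ∈ range (M + 1),
            PowerSeries.coeff (0 + 1 + n) (addConst Φ.F (ℓ a)) * ℓ (-a) ^ n := by
      rw [← PowerSeries.coeff_zero_eq_constantCoeff, PowerSeries.coeff_mk]
    rw [hcc, Finset.sum_range_succ']
    simp only [pow_zero, mul_one]
    obtain ⟨Mc, hMc⟩ := hnil a
    have hMc1 : ℓ a ^ (Mc + 1) = 0 := by rw [pow_succ, hMc, zero_mul]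
    rw [coeff_addConst Φ.F hMc1 (0 + 1 + 0), Finset.sum_range_succ']
    rw [show (0 : ℕ) + 1 + 0 = 1 from rfl, Φ.left_unit 1, if_pos rfl]
    simp only [pow_zero, mul_one, one_mul]
    have h1 : IsNilpotent (∑ n ∈ range M,
        PowerSeries.coeff (0 + 1 + (n + 1)) (addConst Φ.F (ℓ a)) * ℓ (-a) ^ (n + 1)) :=
      isNilpotent_sum fun n _ => nil_mul_pow_succ hM _ n
    have h2 : IsNilpotent (∑ j ∈ range Mc,
        MvPowerSeries.coeff (mono 1 (j + 1)) Φ.F * ℓ a ^ (j + 1)) :=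
      isNilpotent_sum fun j _ => nil_mul_pow_succ hMc _ j
    have h12 := ((Commute.all _ _).isNilpotent_add h1 h2).isUnit_add_one
    convert h12 using 1
    ring
  choose g hgu hfac using key
  constructor
  · refine ⟨∏ a : A, (hgu a).unit, ?_⟩
    have h1 : (∏ a : A, addConst Φ.F (ℓ a))
        = (∏ a : A, (PowerSeries.X - PowerSeries.C (ℓ (-a)))) * ∏ a : A, g a := by
      rw [← Finset.prod_mul_distrib]
      exact Finset.prod_congr rfl fun a _ => hfac a
    have h2 : (∏ a : A, (PowerSeries.X - PowerSeries.C (ℓ (-a))))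
        = ∏ a : A, (PowerSeries.X - PowerSeries.C (ℓ a)) :=
      Fintype.prod_equiv (Equiv.neg A) _ _ fun a => rfl
    have h3 : ((∏ a : A, (hgu a).unit : (PowerSeries R)ˣ) : PowerSeries R)
        = ∏ a : A, g a := by
      rw [show ((∏ a : A, (hgu a).unit : (PowerSeries R)ˣ) : PowerSeries R)
          = ∏ a : A, ((hgu a).unit : PowerSeries R) from
        map_prod (Units.coeHom (PowerSeries R)) _ _]
      exact Finset.prod_congr rfl fun a _ => (hgu a).unit_spec
    rw [h1, h2, h3, mul_comm]
  · intro b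
    rw [nilEval_prod _ _ (hnil b)]
    refine Finset.prod_eq_zero (Finset.mem_univ (-b)) ?_
    rw [nilEval_addConst _ (hnil b) (hnil (-b)), ← hadd b (-b), add_neg_cancel, hzero]
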